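/- The exponential generating function of ∑_{0≤k≤n} C(n,k)|n-2k| is z e^z (I_0(z) + I_1(z)) up to the Poisson factor: e^{-z} ∑_{n≥0} (z/2)^n/n! · ∑_{0≤k≤n} C(n,k)|n-2k| = z e^{-z}(I_0(z) + I_1(z)), where I_α(z) := ∑_{m≥0} (z/2)^{2m+α}/(m! Γ(m+α+1)) is the modified Bessel function. -/
import Mathlib

private lemma sumT (n : ℕ) (j : ℕ) :
    ∑ k ∈ Finset.range (j+1), ((n:ℤ) - 2*k) * n.choose k = (j+1) * n.choose (j+1) := by
  induction j with
  | zero => simp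
  | succ j ih =>
    rw [Finset.sum_range_succ, ih]
    rcases le_or_gt (j+1) n with h | h
    · have h1 := Nat.choose_succ_right_eq n (j+1)
      zify [h] at h1
      push_cast
      linear_combination -h1
    · have h2 : n.choose (j+1) = 0 := Nat.choose_eq_zero_of_lt h
      have h3 : n.choose (j+1+1) = 0 := Nat.choose_eq_zero_of_lt (by omega)
      simp [h2, h3]

private lemma abs_sum (n : ℕ) :
    ((∑ k ∈ Finset.range (n+1), n.choose k * ((n:ℤ) - 2*k).natAbs : ℕ) : ℤ)
      = 2 * ∑ k ∈ Finset.range (n+1), max ((n:ℤ) - 2*k) 0 * n.choose k := by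
  push_cast
  have h1 : ∑ k ∈ Finset.range (n+1), (n.choose k : ℤ) * |(n:ℤ) - 2*k|
      = ∑ k ∈ Finset.range (n+1), (max ((n:ℤ)-2*k) 0 * n.choose k
          + max (2*(k:ℤ)-n) 0 * n.choose k) := by
    refine Finset.sum_congr rfl fun k _ => ?_
    have h : |(n:ℤ) - 2*k| = max ((n:ℤ)-2*k) 0 + max (2*(k:ℤ)-n) 0 := by
      rcases le_total ((n:ℤ)) (2*(k:ℤ)) with h | h
      · rw [abs_of_nonpos (by omega), max_eq_right (by omega), max_eq_left (by omega)]; ring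
      · rw [abs_of_nonneg (by omega), max_eq_left (by omega), max_eq_right (by omega)]; ring
    rw [h]; ring
  rw [h1, Finset.sum_add_distrib]
  have h2 : ∑ k ∈ Finset.range (n+1), max (2*(k:ℤ)-n) 0 * n.choose k
      = ∑ k ∈ Finset.range (n+1), max ((n:ℤ)-2*k) 0 * n.choose k := by
    rw [← Finset.sum_range_reflect]
    refine Finset.sum_congr rfl fun k hk => ?_
    have hk' : k ≤ n := Nat.lt_succ_iff.mp (Finset.mem_range.mp hk)
    simp only [Nat.add_sub_cancel]
    rw [Nat.choose_symm hk', Nat.cast_sub hk']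
    have h3 : 2*((n:ℤ)-k) - n = n - 2*k := by ring
    rw [h3]
  linarith [h2]

private lemma trunc_sum (n h : ℕ) (hh1 : ∀ k, k ≤ h → 2*k ≤ n) (hh2 : ∀ k, h < k → n ≤ 2*k) :
    ∑ k ∈ Finset.range (n+1), max ((n:ℤ) - 2*k) 0 * n.choose k
      = (h+1) * n.choose (h+1) := by
  rw [← sumT n h]
  rw [← Finset.sum_subset (Finset.range_subset_range.mpr (by have := hh1 h le_rfl; omega : h+1 ≤ n+1))]
  · refine Finset.sum_congr rfl fun k hk => ?_
    have hk' : k ≤ h := Nat.lt_succ_iff.mp (Finset.mem_range.mp hk)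
    rw [max_eq_left (by have := hh1 k hk'; omega)]
  · intro k hk hk'
    have hlt : h < k := by have := Finset.mem_range.mp hk; simp at hk'; omega
    rw [max_eq_right (by have := hh2 k hlt; omega)]
    ring

private lemma a_odd (m : ℕ) :
    (∑ k ∈ Finset.range (2*m+1+1), (2*m+1).choose k * (((2*m+1:ℕ):ℤ) - 2*k).natAbs)
      = 2*(m+1)*((2*m+1).choose (m+1)) := by
  have h := abs_sum (2*m+1)
  rw [trunc_sum (2*m+1) m (fun k hk => by omega) (fun k hk => by omega)] at h
  have h2 : ((∑ k ∈ Finset.range (2*m+1+1), (2*m+1).choose k * (((2*m+1:ℕ):ℤ) - 2*k).natAbs : ℕ) : ℤ)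
      = ((2*(m+1)*((2*m+1).choose (m+1)) : ℕ) : ℤ) := by push_cast at h ⊢; linarith
  exact_mod_cast h2

private lemma a_even (m : ℕ) :
    (∑ k ∈ Finset.range (2*m+2+1), (2*m+2).choose k * (((2*m+2:ℕ):ℤ) - 2*k).natAbs)
      = 2*(m+1)*((2*m+2).choose (m+1)) := by
  have h := abs_sum (2*m+2)
  rw [trunc_sum (2*m+2) m (fun k hk => by omega) (fun k hk => by omega)] at h
  have h2 : ((∑ k ∈ Finset.range (2*m+2+1), (2*m+2).choose k * (((2*m+2:ℕ):ℤ) - 2*k).natAbs : ℕ) : ℤ)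
      = ((2*(m+1)*((2*m+2).choose (m+1)) : ℕ) : ℤ) := by push_cast at h ⊢; linarith
  exact_mod_cast h2

private lemma fodd (z : ℂ) (m : ℕ) (A : ℕ) (ha : A = 2*(m+1)*(2*m+1).choose (m+1)) :
    (z/2)^(2*m+1) / ((2*m+1).factorial : ℂ) * (A : ℂ)
      = z * ((z/2)^(2*m) / ((m.factorial : ℂ) * m.factorial)) := by
  have hc : ((2*m+1).choose (m+1) : ℂ) * (m+1).factorial * m.factorial
      = ((2*m+1).factorial : ℂ) := by
    have := Nat.choose_mul_factorial_mul_factorial (show m+1 ≤ 2*m+1 by omega)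
    have h2 : 2*m+1 - (m+1) = m := by omega
    rw [h2] at this
    exact_mod_cast this
  have hA : (A : ℂ) = 2*(m+1)*((2*m+1).choose (m+1)) := by exact_mod_cast ha
  have h1 : ((2*m+1).factorial : ℂ) ≠ 0 := Nat.cast_ne_zero.mpr (Nat.factorial_ne_zero _)
  have h2 : (m.factorial : ℂ) * m.factorial ≠ 0 :=
    mul_ne_zero (Nat.cast_ne_zero.mpr (Nat.factorial_ne_zero _))
      (Nat.cast_ne_zero.mpr (Nat.factorial_ne_zero _))
  have h3 : ((m+1).factorial : ℂ) = (m+1) * m.factorial := by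
    rw [Nat.factorial_succ]; push_cast; ring
  have key : (A : ℂ) / ((2*m+1).factorial : ℂ) = 2 / ((m.factorial : ℂ) * m.factorial) := by
    rw [div_eq_div_iff h1 h2, hA]
    linear_combination 2*hc - 2*((2*m+1).choose (m+1) : ℂ)*(m.factorial : ℂ)*h3
  calc (z/2)^(2*m+1) / ((2*m+1).factorial : ℂ) * (A : ℂ)
      = (z/2)^(2*m) * (z/2) * ((A : ℂ)/((2*m+1).factorial : ℂ)) := by rw [pow_succ]; ring
    _ = (z/2)^(2*m) * (z/2) * (2/((m.factorial : ℂ) * m.factorial)) := by rw [key]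
    _ = z * ((z/2)^(2*m) / ((m.factorial : ℂ) * m.factorial)) := by ring

private lemma feven (z : ℂ) (m : ℕ) (A : ℕ) (ha : A = 2*(m+1)*(2*m+2).choose (m+1)) :
    (z/2)^(2*m+2) / ((2*m+2).factorial : ℂ) * (A : ℂ)
      = z * ((z/2)^(2*m+1) / ((m.factorial : ℂ) * (m+1).factorial)) := by
  have hc : ((2*m+2).choose (m+1) : ℂ) * (m+1).factorial * (m+1).factorial
      = ((2*m+2).factorial : ℂ) := by
    have := Nat.choose_mul_factorial_mul_factorial (show m+1 ≤ 2*m+2 by omega)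
    have h2 : 2*m+2 - (m+1) = m+1 := by omega
    rw [h2] at this
    exact_mod_cast this
  have hA : (A : ℂ) = 2*(m+1)*((2*m+2).choose (m+1)) := by exact_mod_cast ha
  have h1 : ((2*m+2).factorial : ℂ) ≠ 0 := Nat.cast_ne_zero.mpr (Nat.factorial_ne_zero _)
  have h2 : (m.factorial : ℂ) * (m+1).factorial ≠ 0 :=
    mul_ne_zero (Nat.cast_ne_zero.mpr (Nat.factorial_ne_zero _))
      (Nat.cast_ne_zero.mpr (Nat.factorial_ne_zero _))
  have h3 : ((m+1).factorial : ℂ) = (m+1) * m.factorial := by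
    rw [Nat.factorial_succ]; push_cast; ring
  have key : (A : ℂ) / ((2*m+2).factorial : ℂ) = 2 / ((m.factorial : ℂ) * (m+1).factorial) := by
    rw [div_eq_div_iff h1 h2, hA]
    linear_combination 2*hc - 2*((2*m+2).choose (m+1) : ℂ)*((m+1).factorial : ℂ)*h3
  calc (z/2)^(2*m+2) / ((2*m+2).factorial : ℂ) * (A : ℂ)
      = (z/2)^(2*m+1) * (z/2) * ((A : ℂ)/((2*m+2).factorial : ℂ)) := by rw [pow_succ]; ring
    _ = (z/2)^(2*m+1) * (z/2) * (2/((m.factorial : ℂ) * (m+1).factorial)) := by rw [key]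
    _ = z * ((z/2)^(2*m+1) / ((m.factorial : ℂ) * (m+1).factorial)) := by ring

private lemma sumAux (w : ℂ) (c : ℕ → ℕ) (hc : ∀ m, 1 ≤ c m) :
    Summable fun m : ℕ => w^(2*m) / ((m.factorial : ℂ) * c m) := by
  apply Summable.of_norm
  refine Summable.of_nonneg_of_le (fun m => norm_nonneg _) (fun m => ?_)
    (Real.summable_pow_div_factorial (‖w‖^2))
  rw [norm_div, norm_pow, norm_mul]
  rw [Complex.norm_natCast, Complex.norm_natCast, pow_mul]
  apply div_le_div_of_nonneg_left (by positivity) (by positivity)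
  calc (m.factorial : ℝ) = m.factorial * 1 := by ring
    _ ≤ m.factorial * c m := by
        apply mul_le_mul_of_nonneg_left _ (by positivity)
        exact_mod_cast hc m

/-- The modified Bessel function I_α(z) = ∑_{m≥0} (z/2)^{2m+α}/(m! Γ(m+α+1)). -/
noncomputable def besselI (α : ℕ) (z : ℂ) : ℂ :=
  ∑' m : ℕ, (z / 2) ^ (2 * m + α) / ((m.factorial : ℂ) * Complex.Gamma ((m : ℂ) + α + 1))

private lemma bessel0 (z : ℂ) :
    besselI 0 z = ∑' m : ℕ, (z/2)^(2*m) / ((m.factorial : ℂ) * m.factorial) := by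
  unfold besselI
  refine tsum_congr fun m => ?_
  have h : (m : ℂ) + (0:ℕ) + 1 = ((m : ℕ) : ℂ) + 1 := by push_cast; ring
  rw [h, Complex.Gamma_nat_eq_factorial]
  norm_num

private lemma bessel1 (z : ℂ) :
    besselI 1 z = ∑' m : ℕ, (z/2)^(2*m+1) / ((m.factorial : ℂ) * (m+1).factorial) := by
  unfold besselI
  refine tsum_congr fun m => ?_
  have h : (m : ℂ) + (1:ℕ) + 1 = (((m+1) : ℕ) : ℂ) + 1 := by push_cast; ring
  rw [h, Complex.Gamma_nat_eq_factorial]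

private noncomputable def Fz (z : ℂ) (n : ℕ) : ℂ :=
  (z / 2) ^ n / (n.factorial : ℂ) *
    ((∑ k ∈ Finset.range (n + 1), n.choose k * ((n : ℤ) - 2 * k).natAbs : ℕ) : ℂ)

/-- e^{-z} ∑_{n≥0} (z/2)^n/n! · ∑_{0≤k≤n} C(n,k)|n-2k| = z e^{-z} (I_0(z) + I_1(z)). -/
theorem poisson_gf_abs_diff_eq_bessel (z : ℂ) :
    Complex.exp (-z) *
        ∑' n : ℕ,
          (z / 2) ^ n / (n.factorial : ℂ) *
            ((∑ k ∈ Finset.range (n + 1), n.choose k * ((n : ℤ) - 2 * k).natAbs : ℕ) : ℂ) =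
      z * Complex.exp (-z) * (besselI 0 z + besselI 1 z) := by
  have hFodd : ∀ m : ℕ, Fz z (2*m+1)
      = z * ((z/2)^(2*m) / ((m.factorial : ℂ) * m.factorial)) := by
    intro m
    exact fodd z m _ (a_odd m)
  have hFeven : ∀ m : ℕ, Fz z (2*m+2)
      = z * ((z/2)^(2*m+1) / ((m.factorial : ℂ) * (m+1).factorial)) := by
    intro m
    exact feven z m _ (a_even m)
  have hF0 : Fz z 0 = 0 := by
    simp [Fz]
  have hs1 : Summable fun m : ℕ => Fz z (2*m+1) := by
    rw [funext hFodd]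
    exact ((sumAux (z/2) (fun m => m.factorial) fun m => Nat.factorial_pos m).mul_left z)
  have hs0even : Summable fun m : ℕ => Fz z (2*m+2) := by
    rw [funext hFeven]
    have he : (fun m : ℕ => z * ((z/2)^(2*m+1) / ((m.factorial : ℂ) * (m+1).factorial)))
        = fun m : ℕ => (z*(z/2)) * ((z/2)^(2*m) / ((m.factorial : ℂ) * (m+1).factorial)) := by
      funext m; rw [pow_succ]; ring
    rw [he]
    exact ((sumAux (z/2) (fun m => (m+1).factorial) fun m => Nat.factorial_pos (m+1)).mul_left _)
  have hs0 : Summable fun m : ℕ => Fz z (2*m) := by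
    refine (summable_nat_add_iff 1).mp ?_
    have he : ∀ n : ℕ, 2*(n+1) = 2*n+2 := fun n => by ring
    simpa only [he] using hs0even
  have h0 : ∑' m : ℕ, Fz z (2*m) = z * besselI 1 z := by
    rw [Summable.tsum_eq_zero_add hs0]
    rw [show (2*0 : ℕ) = 0 from rfl, hF0, zero_add]
    have e : ∀ n : ℕ, Fz z (2*(n+1))
        = z * ((z/2)^(2*n+1) / ((n.factorial : ℂ) * (n+1).factorial)) := by
      intro n
      rw [show 2*(n+1) = 2*n+2 from by ring]
      exact hFeven n
    rw [tsum_congr e, tsum_mul_left, bessel1]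
  have h1 : ∑' m : ℕ, Fz z (2*m+1) = z * besselI 0 z := by
    rw [tsum_congr hFodd, tsum_mul_left, bessel0]
  have hsplit := tsum_even_add_odd hs0 hs1
  calc Complex.exp (-z) * ∑' n : ℕ, Fz z n
      = Complex.exp (-z) * ((∑' m : ℕ, Fz z (2*m)) + ∑' m : ℕ, Fz z (2*m+1)) := by
        rw [hsplit]
    _ = z * Complex.exp (-z) * (besselI 0 z + besselI 1 z) := by
        rw [h0, h1]; ring
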